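/- Assume condition (6) holds. Then every non-zero element A of 𝔏_Λ is injective as an operator on H_n. -/

import Mathlib

noncomputable section

/-- Auxiliary recursion for the weight function: `W(u, []) = 1` and, reading the word
`w = i_k ⋯ i_1` as the list `[i_k, …, i_1]`,
`W(u, i :: w) = λ_{i, w·u} · W(u, w)`, so that
`W(u, i_k⋯i_1) = λ_{i_1,u} · λ_{i_2, i_1 u} ⋯ λ_{i_k, i_{k-1}⋯i_1 u}`. -/
def Waux {n : ℕ} (lam : Fin n → FreeMonoid (Fin n) → ℝ) (u : FreeMonoid (Fin n)) :
    List (Fin n) → ℝ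
  | [] => 1
  | i :: w => lam i (FreeMonoid.ofList w * u) * Waux lam u w

/-- The weight function `W : F_n^+ × F_n^+ → ℝ` associated to the weights `λ_{i,w}`. -/
def Wfun {n : ℕ} (lam : Fin n → FreeMonoid (Fin n) → ℝ) (u w : FreeMonoid (Fin n)) : ℝ :=
  Waux lam u (FreeMonoid.toList w)

instance {n : ℕ} : DecidableEq (FreeMonoid (Fin n)) := Classical.decEq _

/-- `n`-variable Fock space `H_n = ℓ²(F_n^+)`. -/
abbrev Hn (n : ℕ) : Type := lp (fun _ : FreeMonoid (Fin n) => ℂ) 2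

/-- The standard orthonormal basis vector `ξ_w` of `H_n`. -/
def xi {n : ℕ} (w : FreeMonoid (Fin n)) : Hn n := lp.single 2 w 1

/-- The unital WOT-closed algebra generated by a tuple of bounded operators on `H_n`:
the closure, in the weak operator topology, of the unital subalgebra they generate. -/
def wotAlg {n : ℕ} (T : Fin n → (Hn n →L[ℂ] Hn n)) : Set (Hn n →L[ℂ] Hn n) :=
  (ContinuousLinearMapWOT.ofCLM (σ := RingHom.id ℂ) (E := Hn n) (F := Hn n)) ⁻¹'
    (closure ((ContinuousLinearMapWOT.ofCLM (σ := RingHom.id ℂ) (E := Hn n) (F := Hn n)) ''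
      (Algebra.adjoin ℂ (Set.range T) : Subalgebra ℂ (Hn n →L[ℂ] Hn n))))

namespace LLambdaProof

open scoped ENNReal

variable {n : ℕ}

lemma waux_pos (lam : Fin n → FreeMonoid (Fin n) → ℝ) (hpos : ∀ i w, 0 < lam i w)
    (u : FreeMonoid (Fin n)) : ∀ l : List (Fin n), 0 < Waux lam u l
  | [] => one_pos
  | i :: l => mul_pos (hpos _ _) (waux_pos lam hpos u l)

lemma wfun_pos (lam : Fin n → FreeMonoid (Fin n) → ℝ) (hpos : ∀ i w, 0 < lam i w)
    (u w : FreeMonoid (Fin n)) : 0 < Wfun lam u w :=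
  waux_pos lam hpos u _

/-- The ratio `W(u,w)/W(e,w)` as a complex number. -/
def rQ (lam : Fin n → FreeMonoid (Fin n) → ℝ) (u w : FreeMonoid (Fin n)) : ℂ :=
  ((Wfun lam u w / Wfun lam 1 w : ℝ) : ℂ)

lemma rQ_ne_zero (lam : Fin n → FreeMonoid (Fin n) → ℝ) (hpos : ∀ i w, 0 < lam i w)
    (u w : FreeMonoid (Fin n)) : rQ lam u w ≠ 0 := by
  have h1 := wfun_pos lam hpos u w
  have h2 := wfun_pos lam hpos 1 w
  simp only [rQ, ne_eq, Complex.ofReal_eq_zero]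
  positivity

lemma xi_apply (v z : FreeMonoid (Fin n)) : (xi v : Hn n) z = if z = v then 1 else 0 := by
  rcases eq_or_ne z v with h | h
  · subst h; simp [xi, lp.single_apply_self]
  · simp [xi, lp.single_apply_ne _ _ _ h, h]

lemma lp_eq_zero_of_coords {f : Hn n} (h : ∀ z, f z = 0) : f = 0 := by
  apply lp.ext
  funext z
  simp [h z, lp.coeFn_zero]

lemma innerSL_xi (z : FreeMonoid (Fin n)) (f : Hn n) : innerSL ℂ (xi z) f = f z := by
  rw [innerSL_apply_apply, xi, lp.inner_single_left]
  simp [RCLike.inner_apply]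

lemma single_eq_smul_xi (u : FreeMonoid (Fin n)) (c : ℂ) :
    lp.single 2 u c = c • (xi u : Hn n) := by
  rw [xi, ← lp.single_smul]; norm_num

/-- The structural property of elements of the weighted shift algebra. -/
def Good (lam : Fin n → FreeMonoid (Fin n) → ℝ) (A : Hn n →L[ℂ] Hn n) : Prop :=
  (∀ u w : FreeMonoid (Fin n), (A (xi u)) (w * u) = (A (xi 1)) w * rQ lam u w) ∧
  (∀ u z : FreeMonoid (Fin n), (∀ w, z ≠ w * u) → (A (xi u)) z = 0)

section Mono

variable (T : Fin n → (Hn n →L[ℂ] Hn n))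

def mono (l : List (Fin n)) : Hn n →L[ℂ] Hn n := (l.map T).prod

lemma mono_nil : mono T [] = 1 := rfl

lemma mono_cons (i : Fin n) (l : List (Fin n)) : mono T (i :: l) = T i * mono T l := by
  simp [mono]

lemma mono_append (l1 l2 : List (Fin n)) : mono T (l1 ++ l2) = mono T l1 * mono T l2 := by
  simp [mono]

lemma mono_singleton (i : Fin n) : mono T [i] = T i := by simp [mono]

variable (lam : Fin n → FreeMonoid (Fin n) → ℝ)

lemma mono_apply (hT : ∀ i w, T i (xi w) = (lam i w : ℂ) • xi (FreeMonoid.of i * w)) :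
    ∀ (l : List (Fin n)) (u : FreeMonoid (Fin n)),
    mono T l (xi u) = ((Waux lam u l : ℝ) : ℂ) • xi (FreeMonoid.ofList l * u)
  | [], u => by simp [mono, Waux]
  | i :: l, u => by
    rw [mono_cons, ContinuousLinearMap.mul_apply, mono_apply hT l u, map_smul, hT]
    rw [smul_smul, Waux]
    have hword : FreeMonoid.of i * (FreeMonoid.ofList l * u) = FreeMonoid.ofList (i :: l) * u := by
      apply FreeMonoid.toList.injective
      simp
    rw [hword]
    push_cast
    ring_nf

lemma good_mono (hT : ∀ i w, T i (xi w) = (lam i w : ℂ) • xi (FreeMonoid.of i * w))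
    (hpos : ∀ i w, 0 < lam i w) (l : List (Fin n)) : Good lam (mono T l) := by
  constructor
  · intro u w
    rw [mono_apply T lam hT l u, mono_apply T lam hT l 1]
    simp only [lp.coeFn_smul, Pi.smul_apply, xi_apply, smul_eq_mul, mul_one]
    rcases eq_or_ne w (FreeMonoid.ofList l) with h | h
    · rw [h]
      rw [if_pos rfl, if_pos rfl]
      have h1 : Wfun lam u (FreeMonoid.ofList l) = Waux lam u l := by
        rw [Wfun, FreeMonoid.toList_ofList]
      have h2 : Wfun lam 1 (FreeMonoid.ofList l) = Waux lam 1 l := by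
        rw [Wfun, FreeMonoid.toList_ofList]
      have h2pos := waux_pos lam hpos 1 l
      rw [rQ, h1, h2]
      rw [mul_one]
      push_cast
      have hb : ((Waux lam 1 l : ℝ) : ℂ) ≠ 0 := by
        exact_mod_cast ne_of_gt h2pos
      field_simp
    · rw [if_neg, if_neg h]
      · ring
      · intro hc
        exact h (mul_right_cancel hc)
  · intro u z hz
    rw [mono_apply T lam hT l u]
    simp only [lp.coeFn_smul, Pi.smul_apply, xi_apply, smul_eq_mul]
    rw [if_neg (hz _), mul_zero]

def monoSubmonoid : Submonoid (Hn n →L[ℂ] Hn n) where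
  carrier := {C | ∃ l, C = mono T l}
  one_mem' := ⟨[], rfl⟩
  mul_mem' := by
    rintro a b ⟨l1, rfl⟩ ⟨l2, rfl⟩
    exact ⟨l1 ++ l2, (mono_append T l1 l2).symm⟩

lemma good_zero : Good lam 0 := by
  constructor <;> intro u <;> intros <;>
    simp [rQ, ContinuousLinearMap.zero_apply, lp.coeFn_zero]

lemma good_add {A B : Hn n →L[ℂ] Hn n} (hA : Good lam A) (hB : Good lam B) :
    Good lam (A + B) := by
  constructor
  · intro u w
    simp only [ContinuousLinearMap.add_apply, lp.coeFn_add, Pi.add_apply]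
    rw [hA.1 u w, hB.1 u w]; ring
  · intro u z hz
    simp only [ContinuousLinearMap.add_apply, lp.coeFn_add, Pi.add_apply]
    rw [hA.2 u z hz, hB.2 u z hz, add_zero]

lemma good_smul {A : Hn n →L[ℂ] Hn n} (c : ℂ) (hA : Good lam A) : Good lam (c • A) := by
  constructor
  · intro u w
    simp only [ContinuousLinearMap.smul_apply, lp.coeFn_smul, Pi.smul_apply, smul_eq_mul]
    rw [hA.1 u w]; ring
  · intro u z hz
    simp only [ContinuousLinearMap.smul_apply, lp.coeFn_smul, Pi.smul_apply, smul_eq_mul]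
    rw [hA.2 u z hz, mul_zero]

lemma good_of_mem_adjoin (hT : ∀ i w, T i (xi w) = (lam i w : ℂ) • xi (FreeMonoid.of i * w))
    (hpos : ∀ i w, 0 < lam i w) {B : Hn n →L[ℂ] Hn n}
    (hB : B ∈ Algebra.adjoin ℂ (Set.range T)) : Good lam B := by
  have h3 : B ∈ Subalgebra.toSubmodule (Algebra.adjoin ℂ (Set.range T)) := hB
  rw [Algebra.adjoin_eq_span] at h3
  have hsub : (Submonoid.closure (Set.range T) : Set (Hn n →L[ℂ] Hn n)) ⊆
      (monoSubmonoid T : Set (Hn n →L[ℂ] Hn n)) := by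
    apply Submonoid.closure_le.mpr
    rintro x ⟨i, rfl⟩
    exact ⟨[i], (mono_singleton T i).symm⟩
  have h4 : B ∈ Submodule.span ℂ (monoSubmonoid T : Set (Hn n →L[ℂ] Hn n)) :=
    Submodule.span_mono hsub h3
  refine Submodule.span_induction ?_ ?_ ?_ ?_ h4
  · rintro x ⟨l, rfl⟩
    exact good_mono T lam hT hpos l
  · exact good_zero lam
  · intro x y _ _ hx hy
    exact good_add lam hx hy
  · intro c x _ hx
    exact good_smul lam c hx

end Mono

lemma good_of_wotAlg (lam : Fin n → FreeMonoid (Fin n) → ℝ) (hpos : ∀ i w, 0 < lam i w)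
    (T : Fin n → (Hn n →L[ℂ] Hn n))
    (hT : ∀ i w, T i (xi w) = (lam i w : ℂ) • xi (FreeMonoid.of i * w))
    (A : Hn n →L[ℂ] Hn n) (hA : A ∈ wotAlg T) : Good lam A := by
  set φ := ContinuousLinearMapWOT.ofCLM (σ := RingHom.id ℂ) (E := Hn n) (F := Hn n) with hφ
  let C1 : Set (ContinuousLinearMapWOT (RingHom.id ℂ) (Hn n) (Hn n)) :=
    ⋂ (u : FreeMonoid (Fin n)) (w : FreeMonoid (Fin n)),
      {B | innerSL ℂ (xi (w * u)) (B (xi u)) = innerSL ℂ (xi w) (B (xi 1)) * rQ lam u w}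
  let C2 : Set (ContinuousLinearMapWOT (RingHom.id ℂ) (Hn n) (Hn n)) :=
    ⋂ (u : FreeMonoid (Fin n)) (z : FreeMonoid (Fin n)),
      {B | (∀ w, z ≠ w * u) → innerSL ℂ (xi z) (B (xi u)) = 0}
  have hC1 : IsClosed C1 := by
    refine isClosed_iInter fun u => isClosed_iInter fun w => ?_
    exact isClosed_eq
      (ContinuousLinearMapWOT.continuous_dual_apply (xi u) (innerSL ℂ (xi (w * u))))
      ((ContinuousLinearMapWOT.continuous_dual_apply (xi 1) (innerSL ℂ (xi w))).mul
        continuous_const)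
  have hC2 : IsClosed C2 := by
    refine isClosed_iInter fun u => isClosed_iInter fun z => ?_
    by_cases h : ∀ w : FreeMonoid (Fin n), z ≠ w * u
    · have he : {B : ContinuousLinearMapWOT (RingHom.id ℂ) (Hn n) (Hn n) |
          (∀ w, z ≠ w * u) → innerSL ℂ (xi z) (B (xi u)) = 0} =
          {B | innerSL ℂ (xi z) (B (xi u)) = 0} := by
        ext B; simp [h]
      rw [he]
      exact isClosed_eq
        (ContinuousLinearMapWOT.continuous_dual_apply (xi u) (innerSL ℂ (xi z)))
        continuous_const
    · have he : {B : ContinuousLinearMapWOT (RingHom.id ℂ) (Hn n) (Hn n) |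
          (∀ w, z ≠ w * u) → innerSL ℂ (xi z) (B (xi u)) = 0} = Set.univ := by
        ext B; simp [h]
      rw [he]
      exact isClosed_univ
  have himg : φ '' ((Algebra.adjoin ℂ (Set.range T) : Subalgebra ℂ (Hn n →L[ℂ] Hn n)) :
      Set (Hn n →L[ℂ] Hn n)) ⊆ C1 ∩ C2 := by
    rintro _ ⟨B, hB, rfl⟩
    have hg := good_of_mem_adjoin T lam hT hpos hB
    constructor
    · refine Set.mem_iInter.2 fun u => Set.mem_iInter.2 fun w => ?_
      show innerSL ℂ (xi (w * u)) ((φ B) (xi u)) = innerSL ℂ (xi w) ((φ B) (xi 1)) * rQ lam u w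
      rw [hφ, ContinuousLinearMap.toWOT_apply, ContinuousLinearMap.toWOT_apply,
        innerSL_xi, innerSL_xi]
      exact hg.1 u w
    · refine Set.mem_iInter.2 fun u => Set.mem_iInter.2 fun z => ?_
      show (∀ w, z ≠ w * u) → innerSL ℂ (xi z) ((φ B) (xi u)) = 0
      intro hz
      rw [hφ, ContinuousLinearMap.toWOT_apply, innerSL_xi]
      exact hg.2 u z hz
  have hA' : φ A ∈ C1 ∩ C2 := closure_minimal himg (hC1.inter hC2) hA
  constructor
  · intro u w
    have h1 := Set.mem_iInter.1 (Set.mem_iInter.1 hA'.1 u) w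
    have h2 : innerSL ℂ (xi (w * u)) ((φ A) (xi u)) =
        innerSL ℂ (xi w) ((φ A) (xi 1)) * rQ lam u w := h1
    rwa [hφ, ContinuousLinearMap.toWOT_apply, ContinuousLinearMap.toWOT_apply,
      innerSL_xi, innerSL_xi] at h2
  · intro u z hz
    have h1 := Set.mem_iInter.1 (Set.mem_iInter.1 hA'.2 u) z
    have h2 : (∀ w, z ≠ w * u) → innerSL ℂ (xi z) ((φ A) (xi u)) = 0 := h1
    have h3 := h2 hz
    rwa [hφ, ContinuousLinearMap.toWOT_apply, innerSL_xi] at h3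

end LLambdaProof

open LLambdaProof

/-- Assume condition (6) holds. Then every non-zero element of `𝔏_Λ`
is injective as an operator on `H_n`. -/
theorem LLambda_nonzero_injective (n : ℕ) (hn : 2 ≤ n)
    (lam : Fin n → FreeMonoid (Fin n) → ℝ)
    (hpos : ∀ i w, 0 < lam i w) (hbdd : ∃ C : ℝ, ∀ i w, lam i w ≤ C)
    (h6 : ∃ C : ℝ, ∀ i w, Wfun lam (FreeMonoid.of i) w * (Wfun lam 1 w)⁻¹ ≤ C)
    (T : Fin n → (Hn n →L[ℂ] Hn n))
    (hT : ∀ i w, T i (xi w) = (lam i w : ℂ) • xi (FreeMonoid.of i * w))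
    (A : Hn n →L[ℂ] Hn n) (hA : A ∈ wotAlg T) (hA0 : A ≠ 0) :
    Function.Injective A := by
  classical
  obtain ⟨good1, good2⟩ := good_of_wotAlg lam hpos T hT A hA
  suffices hker : ∀ ζ : Hn n, A ζ = 0 → ζ = 0 by
    intro x y hxy
    have h := hker (x - y) (by rw [map_sub, hxy, sub_self])
    exact sub_eq_zero.mp h
  intro ζ hζ
  by_contra hne
  -- find a minimal-length word in the support of ζ
  have hex : ∃ v : FreeMonoid (Fin n), ζ v ≠ 0 := by
    by_contra h
    push_neg at h
    exact hne (lp_eq_zero_of_coords h)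
  have hexk : ∃ k : ℕ, ∃ v : FreeMonoid (Fin n), ζ v ≠ 0 ∧ v.toList.length = k := by
    obtain ⟨v, hv⟩ := hex
    exact ⟨v.toList.length, v, hv, rfl⟩
  set m := Nat.find hexk with hm
  obtain ⟨v, hv, hvlen⟩ := Nat.find_spec hexk
  have hmin : ∀ u : FreeMonoid (Fin n), u.toList.length < m → ζ u = 0 := by
    intro u hu
    by_contra h
    exact Nat.find_min hexk hu ⟨u, h, rfl⟩
  -- the Fourier expansion of A ζ at a given coordinate, as a (finite) sum
  have hsum : ∀ z : FreeMonoid (Fin n),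
      HasSum (fun u : FreeMonoid (Fin n) => ζ u * (A (xi u)) z) 0 := by
    intro z
    have h0 : HasSum (fun u : FreeMonoid (Fin n) => lp.single 2 u (ζ u)) ζ :=
      lp.hasSum_single (by norm_num) ζ
    have h1 := A.hasSum h0
    have h2 := (innerSL ℂ (xi z)).hasSum h1
    rw [hζ, map_zero] at h2
    have h3 : (fun u : FreeMonoid (Fin n) => innerSL ℂ (xi z) (A (lp.single 2 u (ζ u)))) =
        fun u : FreeMonoid (Fin n) => ζ u * (A (xi u)) z := by
      funext u
      rw [single_eq_smul_xi, map_smul, map_smul, smul_eq_mul, innerSL_xi]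
    rwa [h3] at h2
  -- finite-sum form of the expansion
  have hFz : ∀ z : FreeMonoid (Fin n),
      ∑ k ∈ Finset.range (z.toList.length + 1),
        ζ (FreeMonoid.ofList (z.toList.drop k)) *
          (A (xi (FreeMonoid.ofList (z.toList.drop k)))) z = 0 := by
    intro z
    set F : Finset (FreeMonoid (Fin n)) :=
      (Finset.range (z.toList.length + 1)).image
        (fun k => FreeMonoid.ofList (z.toList.drop k)) with hF
    have hout : ∀ u ∉ F, ζ u * (A (xi u)) z = 0 := by
      intro u hu
      have hns : ∀ w : FreeMonoid (Fin n), z ≠ w * u := by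
        intro w hw
        apply hu
        rw [hF]
        apply Finset.mem_image.2
        refine ⟨w.toList.length, ?_, ?_⟩
        · rw [Finset.mem_range, hw, FreeMonoid.toList_mul, List.length_append]
          omega
        · rw [hw, FreeMonoid.toList_mul, List.drop_left, FreeMonoid.ofList_toList]
      rw [good2 u z hns, mul_zero]
    have h1 : HasSum (fun u => ζ u * (A (xi u)) z) (∑ u ∈ F, ζ u * (A (xi u)) z) :=
      hasSum_sum_of_ne_finset_zero hout
    have h2 : ∑ u ∈ F, ζ u * (A (xi u)) z = 0 := h1.unique (hsum z)
    rw [hF, Finset.sum_image ?_] at h2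
    · exact h2
    · intro k1 hk1 k2 hk2 hk
      have hl := congrArg (fun x : FreeMonoid (Fin n) => x.toList.length) hk
      simp only [FreeMonoid.toList_ofList, List.length_drop] at hl
      rw [Finset.mem_coe, Finset.mem_range] at hk1 hk2
      omega
  -- by strong induction, all Fourier coefficients of A vanish
  have claim : ∀ N : ℕ, ∀ w : FreeMonoid (Fin n), w.toList.length = N → (A (xi 1)) w = 0 := by
    intro N
    induction N using Nat.strong_induction_on with
    | _ N ih =>
      intro w hw
      have heq := hFz (w * v)
      have hlen : (w * v).toList.length = N + m := by
        rw [FreeMonoid.toList_mul, List.length_append, hw, hvlen]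
      rw [hlen] at heq
      have hNmem : N ∈ Finset.range (N + m + 1) := by
        rw [Finset.mem_range]; omega
      have hzero : ∀ k ∈ Finset.range (N + m + 1), k ≠ N →
          ζ (FreeMonoid.ofList ((w * v).toList.drop k)) *
            (A (xi (FreeMonoid.ofList ((w * v).toList.drop k)))) (w * v) = 0 := by
        intro k hk hkN
        rw [Finset.mem_range] at hk
        rcases lt_or_gt_of_ne hkN with hlt | hgt
        · -- k < N : coefficient of the short prefix vanishes by induction
          have hdrop : (w * v).toList.drop k = w.toList.drop k ++ v.toList := by
            rw [FreeMonoid.toList_mul]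
            exact List.drop_append_of_le_length (by omega)
          set u' : FreeMonoid (Fin n) := FreeMonoid.ofList (w.toList.drop k ++ v.toList)
            with hu'
          set w' : FreeMonoid (Fin n) := FreeMonoid.ofList (w.toList.take k) with hw'
          have hzdecomp : w * v = w' * u' := by
            apply FreeMonoid.toList.injective
            rw [FreeMonoid.toList_mul, FreeMonoid.toList_mul, hw', hu',
              FreeMonoid.toList_ofList, FreeMonoid.toList_ofList, ← List.append_assoc,
              List.take_append_drop]
          have hw'len : w'.toList.length = k := by
            rw [hw', FreeMonoid.toList_ofList, List.length_take]
            omega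
          rw [hdrop, ← hu']
          have h5 : (A (xi u')) (w * v) = (A (xi 1)) w' * rQ lam u' w' := by
            rw [hzdecomp]; exact good1 u' w'
          rw [h5, ih k hlt w' hw'len, zero_mul, mul_zero]
        · -- k > N : the coefficient of ζ vanishes by minimality of v
          have hdrop : (w * v).toList.drop k = v.toList.drop (k - N) := by
            rw [FreeMonoid.toList_mul]
            conv_lhs => rw [show k = w.toList.length + (k - N) by omega]
            exact List.drop_length_add_append _
          rw [hdrop]
          have hshort : (FreeMonoid.ofList (v.toList.drop (k - N))).toList.length < m := by
            rw [FreeMonoid.toList_ofList, List.length_drop, hvlen]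
            omega
          rw [hmin _ hshort, zero_mul]
      have hsingle := Finset.sum_eq_single_of_mem N hNmem hzero
      rw [hsingle] at heq
      have hdropN : (w * v).toList.drop N = v.toList := by
        rw [FreeMonoid.toList_mul, ← hw, List.drop_left]
      rw [hdropN, FreeMonoid.ofList_toList] at heq
      have h5 : (A (xi v)) (w * v) = (A (xi 1)) w * rQ lam v w := good1 v w
      rw [h5] at heq
      rcases mul_eq_zero.1 heq with h | h
      · exact absurd h hv
      · rcases mul_eq_zero.1 h with h' | h'
        · exact h'
        · exact absurd h' (rQ_ne_zero lam hpos v w)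
  -- hence A = 0, contradiction
  have hAzero : A = 0 := by
    have hxi : ∀ u : FreeMonoid (Fin n), A (xi u) = 0 := by
      intro u
      apply lp_eq_zero_of_coords
      intro z
      by_cases h : ∃ w : FreeMonoid (Fin n), z = w * u
      · obtain ⟨w, rfl⟩ := h
        rw [good1 u w, claim w.toList.length w rfl, zero_mul]
      · push_neg at h
        exact good2 u z h
    ext f
    have h0 : HasSum (fun u : FreeMonoid (Fin n) => A (lp.single 2 u (f u))) (A f) :=
      A.hasSum (lp.hasSum_single (by norm_num) f)
    have h1 : ∀ u : FreeMonoid (Fin n), A (lp.single 2 u (f u)) = 0 := by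
      intro u
      rw [single_eq_smul_xi, map_smul, hxi, smul_zero]
    simp only [h1] at h0
    have h2 : A f = 0 := h0.unique hasSum_zero
    simp [h2]
  exact hA0 hAzero
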